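/- Let X be a compact metric space and let P₀, P₁ be Borel probability measures on X. Then the infimum, over all finite Borel partitions {A₁,…,A_k} of X such that each A_i is a continuity set for both P₀ and P₁ (i.e., P₀(∂A_i) = 0 and P₁(∂A_i) = 0, where ∂A denotes the topological boundary), of ∑_i min{P₀(A_i), P₁(A_i)}, equals the infimum of ∑_i min{P₀(A_i), P₁(A_i)} over all finite Borel partitions of X. -/

import Mathlib

open MeasureTheory Metric Set ENNReal

section aux

variable {X : Type*}

lemma my_frontier_inter_subset [TopologicalSpace X] (s t : Set X) :
    frontier (s ∩ t) ⊆ frontier s ∪ frontier t :=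
  (frontier_inter_subset s t).trans
    (union_subset_union inter_subset_left inter_subset_right)

lemma my_frontier_diff_subset [TopologicalSpace X] (s t : Set X) :
    frontier (s \ t) ⊆ frontier s ∪ frontier t := by
  rw [diff_eq, ← frontier_compl t]
  exact my_frontier_inter_subset s tᶜ

lemma null_frontier_biUnion [TopologicalSpace X] [MeasurableSpace X] (P : Measure X)
    {ι : Type*} [DecidableEq ι] (u : Finset ι) (B : ι → Set X)
    (h : ∀ i, P (frontier (B i)) = 0) : P (frontier (⋃ i ∈ u, B i)) = 0 := by
  induction u using Finset.induction with
  | empty => simp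
  | @insert a s hx ih =>
    rw [Finset.set_biUnion_insert]
    exact measure_mono_null
      ((frontier_union_subset (B a) (⋃ i ∈ s, B i)).trans
        (union_subset_union inter_subset_left inter_subset_right))
      (measure_union_null (h a) ih)

lemma null_frontier_iUnion [TopologicalSpace X] [MeasurableSpace X] (P : Measure X)
    {ι : Type*} [Fintype ι] (B : ι → Set X)
    (h : ∀ i, P (frontier (B i)) = 0) : P (frontier (⋃ i, B i)) = 0 := by
  classical
  have : (⋃ i, B i) = ⋃ i ∈ (Finset.univ : Finset ι), B i := by simp
  rw [this]
  exact null_frontier_biUnion P _ B h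

/-- Approximation of a measurable set by an open continuity set. -/
lemma approx_continuity_set [MetricSpace X] [MeasurableSpace X] [BorelSpace X]
    (P : Measure X) [IsFiniteMeasure P] {A : Set X} (hA : MeasurableSet A)
    {ε : ℝ≥0∞} (hε : ε ≠ 0) :
    ∃ B : Set X, IsOpen B ∧ P (frontier B) = 0 ∧ P ((A \ B) ∪ (B \ A)) < ε := by
  have hε2 : ε / 2 ≠ 0 := by
    simp only [ne_eq, ENNReal.div_eq_zero_iff, hε, false_or]; exact ENNReal.ofNat_ne_top
  obtain ⟨F, hFA, hFc, hF⟩ := hA.exists_isClosed_diff_lt (measure_ne_top P A) hε2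
  obtain ⟨rs, hrs0, hrs⟩ := exists_null_frontiers_thickening P F
  have htend : Filter.Tendsto (fun n => P (thickening (rs n) F)) Filter.atTop (nhds (P F)) := by
    refine (tendsto_measure_thickening_of_isClosed ⟨1, one_pos, measure_ne_top P _⟩ hFc).comp ?_
    exact tendsto_nhdsWithin_of_tendsto_nhds_of_eventually_within _ hrs0
      (Filter.Eventually.of_forall fun n => (hrs n).1)
  have hlt : P F < P F + ε / 2 := ENNReal.lt_add_right (measure_ne_top P F) hε2
  obtain ⟨n, hn⟩ := (htend.eventually_lt_const hlt).exists
  refine ⟨thickening (rs n) F, isOpen_thickening, (hrs n).2, ?_⟩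
  have hFB : F ⊆ thickening (rs n) F := self_subset_thickening (hrs n).1 F
  have h1 : P (thickening (rs n) F \ F) < ε / 2 :=
    measure_diff_lt_of_lt_add hFc.nullMeasurableSet hFB (measure_ne_top P F) hn
  have hsub : (A \ thickening (rs n) F) ∪ (thickening (rs n) F \ A)
      ⊆ (A \ F) ∪ (thickening (rs n) F \ F) := by
    rintro x (⟨hx1, hx2⟩ | ⟨hx1, hx2⟩)
    · exact Or.inl ⟨hx1, fun h => hx2 (hFB h)⟩
    · exact Or.inr ⟨hx1, fun h => hx2 (hFA h)⟩
  calc P ((A \ thickening (rs n) F) ∪ (thickening (rs n) F \ A))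
      ≤ P (A \ F) + P (thickening (rs n) F \ F) :=
        (measure_mono hsub).trans (measure_union_le _ _)
    _ < ε / 2 + ε / 2 := ENNReal.add_lt_add hF h1
    _ = ε := ENNReal.add_halves ε

end aux

/-- On a compact metric space, the infimum of `∑ᵢ min{P₀(Aᵢ), P₁(Aᵢ)}` over finite Borel
partitions into continuity sets of both `P₀` and `P₁` equals the infimum over all finite
Borel partitions. -/
theorem stmt11 {X : Type*} [MetricSpace X] [CompactSpace X]
    [MeasurableSpace X] [BorelSpace X]
    (P₀ P₁ : Measure X) [IsProbabilityMeasure P₀] [IsProbabilityMeasure P₁] :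
    sInf {r : ℝ | ∃ (k : ℕ) (A : Fin k → Set X),
        (∀ i, MeasurableSet (A i)) ∧ Pairwise (Function.onFun Disjoint A) ∧
        (⋃ i, A i) = Set.univ ∧
        (∀ i, P₀ (frontier (A i)) = 0 ∧ P₁ (frontier (A i)) = 0) ∧
        r = ∑ i, min (P₀ (A i)).toReal (P₁ (A i)).toReal}
      = sInf {r : ℝ | ∃ (k : ℕ) (A : Fin k → Set X),
          (∀ i, MeasurableSet (A i)) ∧ Pairwise (Function.onFun Disjoint A) ∧
          (⋃ i, A i) = Set.univ ∧
          r = ∑ i, min (P₀ (A i)).toReal (P₁ (A i)).toReal} := by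
  classical
  set S₁ := {r : ℝ | ∃ (k : ℕ) (A : Fin k → Set X),
        (∀ i, MeasurableSet (A i)) ∧ Pairwise (Function.onFun Disjoint A) ∧
        (⋃ i, A i) = Set.univ ∧
        (∀ i, P₀ (frontier (A i)) = 0 ∧ P₁ (frontier (A i)) = 0) ∧
        r = ∑ i, min (P₀ (A i)).toReal (P₁ (A i)).toReal} with hS₁
  set S₂ := {r : ℝ | ∃ (k : ℕ) (A : Fin k → Set X),
          (∀ i, MeasurableSet (A i)) ∧ Pairwise (Function.onFun Disjoint A) ∧
          (⋃ i, A i) = Set.univ ∧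
          r = ∑ i, min (P₀ (A i)).toReal (P₁ (A i)).toReal} with hS₂
  have h1mem : (1 : ℝ) ∈ S₁ := by
    refine ⟨1, fun _ => Set.univ, fun _ => MeasurableSet.univ, Subsingleton.pairwise,
      Set.iUnion_const _, fun i => by simp, ?_⟩
    simp [measure_univ]
  have hsub : S₁ ⊆ S₂ := by
    rintro r ⟨k, A, h1, h2, h3, _, h5⟩
    exact ⟨k, A, h1, h2, h3, h5⟩
  have hbdd : ∀ r ∈ S₂, (0 : ℝ) ≤ r := by
    rintro r ⟨k, A, -, -, -, rfl⟩
    exact Finset.sum_nonneg fun i _ => le_min ENNReal.toReal_nonneg ENNReal.toReal_nonneg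
  have hbdd₂ : BddBelow S₂ := ⟨0, hbdd⟩
  have hbdd₁ : BddBelow S₁ := ⟨0, fun r hr => hbdd r (hsub hr)⟩
  refine le_antisymm ?_ (csInf_le_csInf hbdd₂ ⟨1, h1mem⟩ hsub)
  refine le_csInf ⟨1, hsub h1mem⟩ ?_
  rintro r ⟨k, A, hmeas, hdisj, hcover, rfl⟩
  -- reduce to: for every ε > 0 there is an element of S₁ which is ≤ r + ε
  refine le_of_forall_gt_imp_ge_of_dense fun c hc => ?_
  set r := ∑ i, min (P₀ (A i)).toReal (P₁ (A i)).toReal with hr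
  set ε := c - r with hεdef
  have hε : 0 < ε := sub_pos.2 hc
  set δ : ℝ := ε / (2 * k + 1) with hδdef
  have hk1 : (0:ℝ) < 2 * k + 1 := by positivity
  have hδ : 0 < δ := div_pos hε hk1
  have hδ0 : (ENNReal.ofReal δ) ≠ 0 := by simp [ENNReal.ofReal_eq_zero, not_le, hδ]
  -- approximate each A i by an open continuity set B i
  choose B hBopen hBfront hBsd using fun i =>
    approx_continuity_set (P₀ + P₁) (hmeas i) hδ0
  have hBmeas : ∀ i, MeasurableSet (B i) := fun i => (hBopen i).measurableSet
  have hB0 : ∀ i, P₀ (frontier (B i)) = 0 ∧ P₁ (frontier (B i)) = 0 := by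
    intro i
    have := hBfront i
    rw [Measure.add_apply, add_eq_zero] at this
    exact this
  -- the new partition
  set D : Fin k → Set X := fun i => B i \ ⋃ j, ⋃ (_ : j < i), B j with hD
  set C : Fin (k + 1) → Set X := Fin.snoc D (⋃ i, B i)ᶜ with hC
  have hDsub : ∀ i, D i ⊆ B i := fun i => diff_subset
  have hDmeas : ∀ i, MeasurableSet (D i) := by
    intro i
    exact (hBmeas i).diff (MeasurableSet.iUnion fun j => MeasurableSet.iUnion fun _ => hBmeas j)
  have hCmeas : ∀ i, MeasurableSet (C i) := by
    intro i
    induction i using Fin.lastCases with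
    | last => simpa [hC, Fin.snoc_last] using
        (MeasurableSet.iUnion fun j => hBmeas j).compl
    | cast i => simpa [hC, Fin.snoc_castSucc] using hDmeas i
  -- frontiers of the new partition are null
  have hnullU : (P₀ + P₁) (frontier (⋃ i, B i)) = 0 :=
    null_frontier_iUnion _ _ hBfront
  have hCfront : ∀ i, P₀ (frontier (C i)) = 0 ∧ P₁ (frontier (C i)) = 0 := by
    intro i
    have key : (P₀ + P₁) (frontier (C i)) = 0 := by
      induction i using Fin.lastCases with
      | last =>
        have hCl : C (Fin.last k) = (⋃ i, B i)ᶜ := by rw [hC]; simp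
        rw [hCl, frontier_compl]
        exact hnullU
      | cast i =>
        rw [hC]
        simp only [Fin.snoc_castSucc]
        refine measure_mono_null (my_frontier_diff_subset _ _) (measure_union_null (hBfront i) ?_)
        refine null_frontier_iUnion _ _ fun j => ?_
        by_cases h : j < i <;> simp [h, hBfront j]
    rw [Measure.add_apply, add_eq_zero] at key
    exact key
  -- disjointness
  have hDdisj : ∀ i j : Fin k, i < j → Disjoint (D i) (D j) := by
    intro i j hij
    rw [Set.disjoint_left]
    rintro x ⟨hxB, -⟩ ⟨-, hxU⟩
    exact hxU (Set.mem_iUnion.2 ⟨i, Set.mem_iUnion.2 ⟨hij, hxB⟩⟩)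
  have hCdisj : Pairwise (Function.onFun Disjoint C) := by
    intro i j hij
    induction i using Fin.lastCases with
    | last =>
      induction j using Fin.lastCases with
      | last => exact absurd rfl hij
      | cast j =>
        simp only [Function.onFun, hC, Fin.snoc_last, Fin.snoc_castSucc]
        rw [Set.disjoint_left]
        intro x hx hx2
        exact hx (Set.mem_iUnion.2 ⟨j, hDsub j hx2⟩)
    | cast i =>
      induction j using Fin.lastCases with
      | last =>
        simp only [Function.onFun, hC, Fin.snoc_last, Fin.snoc_castSucc]
        rw [Set.disjoint_right]
        intro x hx hx2
        exact hx (Set.mem_iUnion.2 ⟨i, hDsub i hx2⟩)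
      | cast j =>
        simp only [Function.onFun, hC, Fin.snoc_castSucc]
        have hij' : i ≠ j := fun h => hij (by rw [h])
        rcases hij'.lt_or_gt with h | h
        · exact hDdisj i j h
        · exact (hDdisj j i h).symm
  -- covering
  have hCcover : (⋃ i, C i) = Set.univ := by
    ext x
    simp only [Set.mem_univ, iff_true, Set.mem_iUnion]
    by_cases hx : x ∈ ⋃ i, B i
    · obtain ⟨i, hi⟩ := Set.mem_iUnion.1 hx
      set u : Finset (Fin k) := Finset.univ.filter (fun j => x ∈ B j) with hu
      have hune : u.Nonempty := ⟨i, by simp [hu, hi]⟩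
      set i₀ := u.min' hune with hi₀
      refine ⟨Fin.castSucc i₀, ?_⟩
      rw [hC]
      simp only [Fin.snoc_castSucc]
      refine ⟨(Finset.mem_filter.1 (u.min'_mem hune)).2, ?_⟩
      intro hmem
      obtain ⟨j, hj⟩ := Set.mem_iUnion.1 hmem
      obtain ⟨hjlt, hjB⟩ := Set.mem_iUnion.1 hj
      exact absurd (u.min'_le j (by simp [hu, hjB])) (not_le.2 hjlt)
    · exact ⟨Fin.last k, by rw [hC]; simpa [Fin.snoc_last] using hx⟩
  -- membership in S₁
  have hmem : (∑ i, min (P₀ (C i)).toReal (P₁ (C i)).toReal) ∈ S₁ :=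
    ⟨k + 1, C, hCmeas, hCdisj, hCcover, hCfront, rfl⟩
  refine (csInf_le hbdd₁ hmem).trans ?_
  -- now the quantitative bound
  have key1 : ∀ i : Fin k,
      min (P₀ (D i)).toReal (P₁ (D i)).toReal
        ≤ min (P₀ (A i)).toReal (P₁ (A i)).toReal + δ := by
    intro i
    have hsd : (P₀ + P₁) (D i \ A i) < ENNReal.ofReal δ := by
      refine lt_of_le_of_lt (measure_mono ?_) (hBsd i)
      intro x ⟨hx1, hx2⟩
      exact Or.inr ⟨hDsub i hx1, hx2⟩
    have hbound : ∀ (Q : Measure X), Q ≤ P₀ + P₁ → IsProbabilityMeasure Q →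
        (Q (D i)).toReal ≤ (Q (A i)).toReal + δ := by
      intro Q hQ hQp
      have h1 : Q (D i) ≤ Q (A i) + ENNReal.ofReal δ := by
        calc Q (D i) ≤ Q (A i ∪ (D i \ A i)) := measure_mono fun x hx => by
              by_cases h : x ∈ A i
              · exact Or.inl h
              · exact Or.inr ⟨hx, h⟩
          _ ≤ Q (A i) + Q (D i \ A i) := measure_union_le _ _
          _ ≤ Q (A i) + (P₀ + P₁) (D i \ A i) := by
              gcongr
          _ ≤ Q (A i) + ENNReal.ofReal δ := by gcongr
      calc (Q (D i)).toReal ≤ (Q (A i) + ENNReal.ofReal δ).toReal :=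
            ENNReal.toReal_mono (by finiteness) h1
        _ = (Q (A i)).toReal + δ := by
            rw [ENNReal.toReal_add (measure_ne_top _ _) ENNReal.ofReal_ne_top,
              ENNReal.toReal_ofReal hδ.le]
    have h₀ := hbound P₀ (Measure.le_add_right le_rfl) inferInstance
    have h₁ := hbound P₁ (Measure.le_add_left le_rfl) inferInstance
    calc min (P₀ (D i)).toReal (P₁ (D i)).toReal
        ≤ min ((P₀ (A i)).toReal + δ) ((P₁ (A i)).toReal + δ) := min_le_min h₀ h₁
      _ = min (P₀ (A i)).toReal (P₁ (A i)).toReal + δ := min_add_add_right _ _ _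
  have key2 : min (P₀ ((⋃ i, B i)ᶜ)).toReal (P₁ ((⋃ i, B i)ᶜ)).toReal ≤ k * δ := by
    have hsub2 : (⋃ i, B i)ᶜ ⊆ ⋃ i, ((A i \ B i) ∪ (B i \ A i)) := by
      intro x hx
      have : x ∈ ⋃ i, A i := hcover ▸ Set.mem_univ x
      obtain ⟨i, hi⟩ := Set.mem_iUnion.1 this
      exact Set.mem_iUnion.2 ⟨i, Or.inl ⟨hi, fun h => hx (Set.mem_iUnion.2 ⟨i, h⟩)⟩⟩
    have h1 : (P₀ + P₁) ((⋃ i, B i)ᶜ) ≤ (k : ℝ≥0∞) * ENNReal.ofReal δ := by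
      calc (P₀ + P₁) ((⋃ i, B i)ᶜ) ≤ ∑ i, (P₀ + P₁) ((A i \ B i) ∪ (B i \ A i)) :=
            (measure_mono hsub2).trans (measure_iUnion_fintype_le _ _)
        _ ≤ ∑ _i : Fin k, ENNReal.ofReal δ := Finset.sum_le_sum fun i _ => (hBsd i).le
        _ = (k : ℝ≥0∞) * ENNReal.ofReal δ := by simp [mul_comm]
    have h2 : P₀ ((⋃ i, B i)ᶜ) ≤ (k : ℝ≥0∞) * ENNReal.ofReal δ :=
      le_trans (by simpa using (Measure.le_add_right le_rfl : P₀ ≤ P₀ + P₁) _) h1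
    refine (min_le_left _ _).trans ?_
    calc (P₀ ((⋃ i, B i)ᶜ)).toReal ≤ ((k : ℝ≥0∞) * ENNReal.ofReal δ).toReal :=
          ENNReal.toReal_mono (by finiteness) h2
      _ = k * δ := by
          rw [ENNReal.toReal_mul, ENNReal.toReal_ofReal hδ.le]; simp
  calc (∑ i, min (P₀ (C i)).toReal (P₁ (C i)).toReal)
      = (∑ i : Fin k, min (P₀ (C (Fin.castSucc i))).toReal (P₁ (C (Fin.castSucc i))).toReal)
        + min (P₀ (C (Fin.last k))).toReal (P₁ (C (Fin.last k))).toReal :=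
        Fin.sum_univ_castSucc _
    _ = (∑ i : Fin k, min (P₀ (D i)).toReal (P₁ (D i)).toReal)
        + min (P₀ ((⋃ i, B i)ᶜ)).toReal (P₁ ((⋃ i, B i)ᶜ)).toReal := by
        rw [hC]; simp only [Fin.snoc_castSucc, Fin.snoc_last]
    _ ≤ (∑ i : Fin k, (min (P₀ (A i)).toReal (P₁ (A i)).toReal + δ)) + k * δ := by
        exact add_le_add (Finset.sum_le_sum fun i _ => key1 i) key2
    _ = r + 2 * k * δ := by
        rw [Finset.sum_add_distrib]
        simp [hr]
        ring
    _ ≤ r + ε := by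
        have hkk : (2 * (k:ℝ)) / (2 * k + 1) ≤ 1 := by
          rw [div_le_one hk1]; linarith
        have : 2 * (k:ℝ) * δ ≤ ε := by
          calc 2 * (k:ℝ) * δ = (2 * k) / (2 * k + 1) * ε := by rw [hδdef]; ring
            _ ≤ 1 * ε := mul_le_mul_of_nonneg_right hkk hε.le
            _ = ε := one_mul ε
        linarith
    _ = c := by rw [hεdef]; ring
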